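/- Let $V$ be an $n$-dimensional real inner product space, let $A$ be a symmetric bilinear form on $V$, let $B = A \circ g$ be its Kulkarni–Nomizu product with the metric, and let $W$ be an algebraic Weyl tensor (algebraic curvature tensor with vanishing Ricci contraction). Then $\langle B, W^2 + W^\sharp \rangle = 0$, where $\langle T, U \rangle = \frac{1}{8}\sum_{i,j,k,l} T_{ijkl}U_{ijkl}$. -/

import Mathlib

open Finset

theorem stmt_11 (n : ℕ) (A : Matrix (Fin n) (Fin n) ℝ) (hA : A.IsSymm)
    (W : Fin n → Fin n → Fin n → Fin n → ℝ)
    (hsym : (∀ i j k l, W i j k l = -W j i k l) ∧ (∀ i j k l, W i j k l = -W i j l k) ∧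
      (∀ i j k l, W i j k l = W k l i j))
    (hbianchi : ∀ i j k l, W i j k l + W j k i l + W k i j l = 0)
    (hrc : ∀ i j, (∑ m, W i m j m) = 0) :
    -- B = A ∘ g, paired with W² + W♯
    (1 / 8 : ℝ) * ∑ i, ∑ j, ∑ k, ∑ l,
      (A i k * (if j = l then (1 : ℝ) else 0) + A j l * (if i = k then (1 : ℝ) else 0)
        - A i l * (if j = k then (1 : ℝ) else 0) - A j k * (if i = l then (1 : ℝ) else 0)) *
      ((1 / 2 : ℝ) * (∑ p, ∑ q, W i j p q * W k l p q)
        + ∑ p, ∑ q, (W i p k q * W j p l q - W i p l q * W j p k q)) = 0 := by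
  obtain ⟨h1, h2, h3⟩ := hsym
  -- Ricci-type contraction in slots 1 and 3 vanishes
  have hrc' : ∀ p q : Fin n, (∑ j, W j p j q) = 0 := by
    intro p q
    have e : ∀ j : Fin n, W j p j q = W p j q j := by
      intro j
      rw [h1 j p j q, h2 p j j q]; ring
    calc (∑ j, W j p j q) = ∑ j, W p j q j := Finset.sum_congr rfl fun j _ => e j
      _ = 0 := hrc p q
  -- middle terms vanish
  have mid : ∀ C : Fin n → Fin n → ℝ, (∑ j, ∑ p, ∑ q, C p q * W j p j q) = 0 := by
    intro C
    rw [Finset.sum_comm]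
    refine Finset.sum_eq_zero fun p _ => ?_
    rw [Finset.sum_comm]
    refine Finset.sum_eq_zero fun q _ => ?_
    rw [← Finset.mul_sum, hrc' p q, mul_zero]
  -- core identity
  have core : ∀ a b : Fin n,
      (∑ j, ∑ p, ∑ q, W a p j q * W j p b q)
        = (1 / 2 : ℝ) * ∑ j, ∑ p, ∑ q, W a j p q * W b j p q := by
    intro a b
    have hG : (∑ j, ∑ p, ∑ q, W a j p q * W p b j q)
        = ∑ j, ∑ p, ∑ q, W a j p q * W j p b q := by
      refine Finset.sum_congr rfl fun j _ => ?_
      rw [Finset.sum_comm]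
      refine Finset.sum_congr rfl fun u _ => Finset.sum_congr rfl fun v _ => ?_
      rw [h2 a j v u, h3 v b j u, h2 j u v b]; ring
    have e : ∀ j p q : Fin n,
        W a j p q * W j p b q = -(W a j p q * W p b j q) - W a j p q * W b j p q := by
      intro j p q
      have hb := hbianchi j p b q
      rw [show W j p b q = -W p b j q - W b j p q by linarith]; ring
    have hY : (∑ j, ∑ p, ∑ q, W a j p q * W j p b q)
        = -(∑ j, ∑ p, ∑ q, W a j p q * W p b j q)
          - (∑ j, ∑ p, ∑ q, W a j p q * W b j p q) := by
      calc (∑ j, ∑ p, ∑ q, W a j p q * W j p b q)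
          = ∑ j, ∑ p, ∑ q, (-(W a j p q * W p b j q) - W a j p q * W b j p q) :=
            Finset.sum_congr rfl fun j _ => Finset.sum_congr rfl fun p _ =>
              Finset.sum_congr rfl fun q _ => e j p q
        _ = _ := by simp [Finset.sum_sub_distrib]
    have hT : (∑ j, ∑ p, ∑ q, W a p j q * W j p b q)
        = ∑ j, ∑ p, ∑ q, -(W a j p q * W j p b q) := by
      rw [Finset.sum_comm]
      refine Finset.sum_congr rfl fun u _ => Finset.sum_congr rfl fun v _ =>
        Finset.sum_congr rfl fun q _ => ?_
      rw [h1 v u b q]; ring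
    have hneg : (∑ j, ∑ p, ∑ q, -(W a j p q * W j p b q))
        = -∑ j, ∑ p, ∑ q, W a j p q * W j p b q := by simp
    rw [hT, hneg]
    rw [hG] at hY
    linarith
  -- four contraction keys
  have key1 : ∀ i k : Fin n, (∑ j, ((1 / 2 : ℝ) * (∑ p, ∑ q, W i j p q * W k j p q)
      + ∑ p, ∑ q, (W i p k q * W j p j q - W i p j q * W j p k q))) = 0 := by
    intro i k
    have s1 : (∑ j, ((1 / 2 : ℝ) * (∑ p, ∑ q, W i j p q * W k j p q)
        + ∑ p, ∑ q, (W i p k q * W j p j q - W i p j q * W j p k q)))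
        = (1 / 2 : ℝ) * (∑ j, ∑ p, ∑ q, W i j p q * W k j p q)
          + ((∑ j, ∑ p, ∑ q, W i p k q * W j p j q)
            - ∑ j, ∑ p, ∑ q, W i p j q * W j p k q) := by
      simp only [Finset.sum_add_distrib, Finset.sum_sub_distrib, ← Finset.mul_sum]
    rw [s1, mid (fun p q => W i p k q), core i k]; ring
  have key2 : ∀ j l : Fin n, (∑ i, ((1 / 2 : ℝ) * (∑ p, ∑ q, W i j p q * W i l p q)
      + ∑ p, ∑ q, (W i p i q * W j p l q - W i p l q * W j p i q))) = 0 := by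
    intro j l
    have s0 : ∀ i : Fin n, ((1 / 2 : ℝ) * (∑ p, ∑ q, W i j p q * W i l p q)
        + ∑ p, ∑ q, (W i p i q * W j p l q - W i p l q * W j p i q))
        = ((1 / 2 : ℝ) * (∑ p, ∑ q, W j i p q * W l i p q)
        + ∑ p, ∑ q, (W j p l q * W i p i q - W j p i q * W i p l q)) := by
      intro i
      congr 1
      · congr 1
        refine Finset.sum_congr rfl fun p _ => Finset.sum_congr rfl fun q _ => ?_
        rw [h1 i j p q, h1 i l p q]; ring
      · refine Finset.sum_congr rfl fun p _ => Finset.sum_congr rfl fun q _ => by ring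
    rw [Finset.sum_congr rfl fun i _ => s0 i]
    have s1 : (∑ i, ((1 / 2 : ℝ) * (∑ p, ∑ q, W j i p q * W l i p q)
        + ∑ p, ∑ q, (W j p l q * W i p i q - W j p i q * W i p l q)))
        = (1 / 2 : ℝ) * (∑ i, ∑ p, ∑ q, W j i p q * W l i p q)
          + ((∑ i, ∑ p, ∑ q, W j p l q * W i p i q)
            - ∑ i, ∑ p, ∑ q, W j p i q * W i p l q) := by
      simp only [Finset.sum_add_distrib, Finset.sum_sub_distrib, ← Finset.mul_sum]
    rw [s1, mid (fun p q => W j p l q), core j l]; ring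
  have key3 : ∀ i l : Fin n, (∑ j, ((1 / 2 : ℝ) * (∑ p, ∑ q, W i j p q * W j l p q)
      + ∑ p, ∑ q, (W i p j q * W j p l q - W i p l q * W j p j q))) = 0 := by
    intro i l
    have s1 : (∑ j, ((1 / 2 : ℝ) * (∑ p, ∑ q, W i j p q * W j l p q)
        + ∑ p, ∑ q, (W i p j q * W j p l q - W i p l q * W j p j q)))
        = (1 / 2 : ℝ) * (∑ j, ∑ p, ∑ q, W i j p q * W j l p q)
          + ((∑ j, ∑ p, ∑ q, W i p j q * W j p l q)
            - ∑ j, ∑ p, ∑ q, W i p l q * W j p j q) := by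
      simp only [Finset.sum_add_distrib, Finset.sum_sub_distrib, ← Finset.mul_sum]
    have s2 : (∑ j, ∑ p, ∑ q, W i j p q * W j l p q)
        = ∑ j, ∑ p, ∑ q, -(W i j p q * W l j p q) :=
      Finset.sum_congr rfl fun j _ => Finset.sum_congr rfl fun p _ =>
        Finset.sum_congr rfl fun q _ => by rw [h1 j l p q]; ring
    have s3 : (∑ j, ∑ p, ∑ q, -(W i j p q * W l j p q))
        = -∑ j, ∑ p, ∑ q, W i j p q * W l j p q := by simp
    rw [s1, s2, s3, mid (fun p q => W i p l q), core i l]; ring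
  have key4 : ∀ j k : Fin n, (∑ i, ((1 / 2 : ℝ) * (∑ p, ∑ q, W i j p q * W k i p q)
      + ∑ p, ∑ q, (W i p k q * W j p i q - W i p i q * W j p k q))) = 0 := by
    intro j k
    have s0 : ∀ i : Fin n, ((1 / 2 : ℝ) * (∑ p, ∑ q, W i j p q * W k i p q)
        + ∑ p, ∑ q, (W i p k q * W j p i q - W i p i q * W j p k q))
        = ((-(1 / 2) : ℝ) * (∑ p, ∑ q, W j i p q * W k i p q)
        + ∑ p, ∑ q, (W j p i q * W i p k q - W j p k q * W i p i q)) := by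
      intro i
      have a1 : (∑ p, ∑ q, W i j p q * W k i p q)
          = ∑ p, ∑ q, -(W j i p q * W k i p q) :=
        Finset.sum_congr rfl fun p _ => Finset.sum_congr rfl fun q _ => by
          rw [h1 i j p q]; ring
      have a2 : (∑ p, ∑ q, -(W j i p q * W k i p q))
          = -∑ p, ∑ q, W j i p q * W k i p q := by simp
      rw [a1, a2]
      congr 1
      · ring
      · refine Finset.sum_congr rfl fun p _ => Finset.sum_congr rfl fun q _ => by ring
    rw [Finset.sum_congr rfl fun i _ => s0 i]
    have s1 : (∑ i, ((-(1 / 2) : ℝ) * (∑ p, ∑ q, W j i p q * W k i p q)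
        + ∑ p, ∑ q, (W j p i q * W i p k q - W j p k q * W i p i q)))
        = (-(1 / 2) : ℝ) * (∑ i, ∑ p, ∑ q, W j i p q * W k i p q)
          + ((∑ i, ∑ p, ∑ q, W j p i q * W i p k q)
            - ∑ i, ∑ p, ∑ q, W j p k q * W i p i q) := by
      simp only [Finset.sum_add_distrib, Finset.sum_sub_distrib, ← Finset.mul_sum]
    rw [s1, mid (fun p q => W j p k q), core j k]; ring
  -- generic reduction of the delta contraction
  have red : ∀ V : Fin n → Fin n → Fin n → Fin n → ℝ,
      (∑ i, ∑ j, ∑ k, ∑ l,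
        (A i k * (if j = l then (1 : ℝ) else 0) + A j l * (if i = k then (1 : ℝ) else 0)
          - A i l * (if j = k then (1 : ℝ) else 0) - A j k * (if i = l then (1 : ℝ) else 0)) *
        V i j k l)
      = ((∑ i, ∑ k, A i k * ∑ j, V i j k j) + (∑ j, ∑ l, A j l * ∑ i, V i j i l))
        - (∑ i, ∑ l, A i l * ∑ j, V i j j l) - (∑ j, ∑ k, A j k * ∑ i, V i j k i) := by
    intro V
    have split : ∀ i j k l : Fin n,
        (A i k * (if j = l then (1 : ℝ) else 0) + A j l * (if i = k then (1 : ℝ) else 0)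
          - A i l * (if j = k then (1 : ℝ) else 0) - A j k * (if i = l then (1 : ℝ) else 0)) *
        V i j k l
        = (((if j = l then A i k * V i j k l else 0) + (if i = k then A j l * V i j k l else 0))
          - (if j = k then A i l * V i j k l else 0)) - (if i = l then A j k * V i j k l else 0) := by
      intro i j k l
      split_ifs <;> ring
    calc (∑ i, ∑ j, ∑ k, ∑ l,
        (A i k * (if j = l then (1 : ℝ) else 0) + A j l * (if i = k then (1 : ℝ) else 0)
          - A i l * (if j = k then (1 : ℝ) else 0) - A j k * (if i = l then (1 : ℝ) else 0)) *
        V i j k l)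
        = ∑ i, ∑ j, ∑ k, ∑ l,
          ((((if j = l then A i k * V i j k l else 0) + (if i = k then A j l * V i j k l else 0))
          - (if j = k then A i l * V i j k l else 0)) - (if i = l then A j k * V i j k l else 0)) :=
          Finset.sum_congr rfl fun i _ => Finset.sum_congr rfl fun j _ =>
            Finset.sum_congr rfl fun k _ => Finset.sum_congr rfl fun l _ => split i j k l
      _ = (((∑ i, ∑ j, ∑ k, ∑ l, if j = l then A i k * V i j k l else 0)
            + ∑ i, ∑ j, ∑ k, ∑ l, if i = k then A j l * V i j k l else 0)
            - ∑ i, ∑ j, ∑ k, ∑ l, if j = k then A i l * V i j k l else 0)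
            - ∑ i, ∑ j, ∑ k, ∑ l, if i = l then A j k * V i j k l else 0 := by
          simp only [Finset.sum_add_distrib, Finset.sum_sub_distrib]
      _ = ((∑ i, ∑ k, A i k * ∑ j, V i j k j) + (∑ j, ∑ l, A j l * ∑ i, V i j i l))
            - (∑ i, ∑ l, A i l * ∑ j, V i j j l) - (∑ j, ∑ k, A j k * ∑ i, V i j k i) := by
          congr 1
          · congr 1
            · congr 1
              · -- δ_{jl} term
                refine Finset.sum_congr rfl fun i _ => ?_
                rw [Finset.sum_comm]
                refine Finset.sum_congr rfl fun k _ => ?_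
                rw [Finset.mul_sum]
                refine Finset.sum_congr rfl fun j _ => ?_
                simp
              · -- δ_{ik} term
                rw [Finset.sum_comm]
                refine Finset.sum_congr rfl fun j _ => ?_
                have e : ∀ i : Fin n, (∑ k, ∑ l, if i = k then A j l * V i j k l else 0)
                    = ∑ l, A j l * V i j i l := by
                  intro i
                  have e' : ∀ k : Fin n, (∑ l, if i = k then A j l * V i j k l else 0)
                      = if i = k then (∑ l, A j l * V i j k l) else 0 := by
                    intro k; split_ifs <;> simp
                  rw [Finset.sum_congr rfl fun k _ => e' k]
                  simp
                rw [Finset.sum_congr rfl fun i _ => e i, Finset.sum_comm]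
                exact Finset.sum_congr rfl fun l _ => (Finset.mul_sum _ _ _).symm
            · -- δ_{jk} term
              refine Finset.sum_congr rfl fun i _ => ?_
              have e : ∀ j : Fin n, (∑ k, ∑ l, if j = k then A i l * V i j k l else 0)
                  = ∑ l, A i l * V i j j l := by
                intro j
                have e' : ∀ k : Fin n, (∑ l, if j = k then A i l * V i j k l else 0)
                    = if j = k then (∑ l, A i l * V i j k l) else 0 := by
                  intro k; split_ifs <;> simp
                rw [Finset.sum_congr rfl fun k _ => e' k]
                simp
              rw [Finset.sum_congr rfl fun j _ => e j, Finset.sum_comm]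
              exact Finset.sum_congr rfl fun l _ => (Finset.mul_sum _ _ _).symm
          · -- δ_{il} term
            rw [Finset.sum_comm]
            refine Finset.sum_congr rfl fun j _ => ?_
            have e : ∀ i : Fin n, (∑ k, ∑ l, if i = l then A j k * V i j k l else 0)
                = ∑ k, A j k * V i j k i := by
              intro i
              refine Finset.sum_congr rfl fun k _ => ?_
              simp
            rw [Finset.sum_congr rfl fun i _ => e i, Finset.sum_comm]
            exact Finset.sum_congr rfl fun k _ => (Finset.mul_sum _ _ _).symm
  have main := red (fun i j k l => (1 / 2 : ℝ) * (∑ p, ∑ q, W i j p q * W k l p q)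
      + ∑ p, ∑ q, (W i p k q * W j p l q - W i p l q * W j p k q))
  beta_reduce at main
  rw [main]
  simp only [key1, key2, key3, key4, mul_zero, Finset.sum_const_zero]
  norm_num
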